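/- Let λ ∈ (0, 1) and L_A, L_B > 0, and fix n_A > 0. Define the cost C(n_B) = λ · 2 n_A n_B (L_A + L_B)/(n_A + n_B) + (1−λ) · [n_B² L_B + n_A² L_A]/(n_A + n_B)² for n_B ≥ 0 (this is the team disutility with α = 1, β = 0, and no noise). Then C′(n_B) = 0 if and only if λ(L_A+L_B) n_A (n_A+n_B) + (1−λ)(n_B L_B − n_A L_A) = 0, which (when a nonnegative solution exists) gives the unique minimizer n_B* = [λ(L_A+L_B)n_A² − (1−λ)L_A n_A] / [−λ(L_A+L_B)n_A − (1−λ)L_B], and moreover any such minimizer satisfies n_B* < n_A · L_A/L_B. -/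

import Mathlib

open Real

/-- first-order condition for the `α = 1, β = 0` disutility, the resulting
closed-form unique minimizer, and the fact that it falls short of the
accuracy-optimal count `n_A · L_A/L_B`. -/
theorem stmt_6 (lam LA LB nA : ℝ)
    (hlam0 : 0 < lam) (hlam1 : lam < 1)
    (hLA : 0 < LA) (hLB : 0 < LB) (hnA : 0 < nA)
    (C : ℝ → ℝ)
    (hC : ∀ y : ℝ, C y =
      lam * (2 * nA * y * (LA + LB) / (nA + y)) +
      (1 - lam) * ((y ^ 2 * LB + nA ^ 2 * LA) / (nA + y) ^ 2))
    (nBstar : ℝ)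
    (hstar : nBstar = (lam * (LA + LB) * nA ^ 2 - (1 - lam) * LA * nA) /
      (-(lam * (LA + LB) * nA) - (1 - lam) * LB)) :
    (∀ nB : ℝ, 0 ≤ nB →
      (deriv C nB = 0 ↔
        lam * (LA + LB) * nA * (nA + nB) + (1 - lam) * (nB * LB - nA * LA) = 0)) ∧
    (0 ≤ nBstar →
      (∀ nB : ℝ, 0 ≤ nB → nB ≠ nBstar → C nBstar < C nB) ∧
      nBstar < nA * (LA / LB)) := by
  have hCfun : C = fun y : ℝ =>
      lam * (2 * nA * y * (LA + LB) / (nA + y)) +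
      (1 - lam) * ((y ^ 2 * LB + nA ^ 2 * LA) / (nA + y) ^ 2) := funext hC
  have hlam1' : 0 < 1 - lam := by linarith
  -- derivative formula
  have key : ∀ y : ℝ, -nA < y → HasDerivAt C
      (2 * nA / (nA + y) ^ 3 *
        (lam * (LA + LB) * nA * (nA + y) + (1 - lam) * (y * LB - nA * LA))) y := by
    intro y hy
    have hpos : 0 < nA + y := by linarith
    have hne : nA + y ≠ 0 := ne_of_gt hpos
    have hne2 : (nA + y) ^ 2 ≠ 0 := pow_ne_zero _ hne
    have hid : HasDerivAt (fun x : ℝ => x) 1 y := hasDerivAt_id y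
    have hden : HasDerivAt (fun x : ℝ => nA + x) 1 y := by
      exact hid.const_add nA
    have hnum1 : HasDerivAt (fun x : ℝ => 2 * nA * x * (LA + LB))
        (2 * nA * 1 * (LA + LB)) y := (hid.const_mul (2 * nA)).mul_const (LA + LB)
    have h1 : HasDerivAt (fun x : ℝ => lam * (2 * nA * x * (LA + LB) / (nA + x)))
        (lam * ((2 * nA * 1 * (LA + LB) * (nA + y) - 2 * nA * y * (LA + LB) * 1)
          / (nA + y) ^ 2)) y := (hnum1.div hden hne).const_mul lam
    have hnum2 : HasDerivAt (fun x : ℝ => x ^ 2 * LB + nA ^ 2 * LA)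
        (2 * y ^ 1 * LB) y := ((hasDerivAt_pow 2 y).mul_const LB).add_const (nA ^ 2 * LA)
    have hden2 : HasDerivAt (fun x : ℝ => (nA + x) ^ 2) (2 * (nA + y) ^ 1 * 1) y :=
      hden.pow 2
    have h2 : HasDerivAt
        (fun x : ℝ => (1 - lam) * ((x ^ 2 * LB + nA ^ 2 * LA) / (nA + x) ^ 2))
        ((1 - lam) * ((2 * y ^ 1 * LB * (nA + y) ^ 2 -
          (y ^ 2 * LB + nA ^ 2 * LA) * (2 * (nA + y) ^ 1 * 1)) / ((nA + y) ^ 2) ^ 2)) y :=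
      (hnum2.div hden2 hne2).const_mul (1 - lam)
    have h := h1.add h2
    rw [hCfun]
    refine h.congr_deriv ?_
    field_simp
    ring
  constructor
  · intro nB hnB
    have hpos : 0 < nA + nB := by linarith
    have hd := (key nB (by linarith)).deriv
    rw [hd]
    have hfac : 0 < 2 * nA / (nA + nB) ^ 3 := by positivity
    constructor
    · intro h
      rcases mul_eq_zero.mp h with h' | h'
      · exact absurd h' (ne_of_gt hfac)
      · exact h'
    · intro h
      rw [h, mul_zero]
  · intro hns
    set s : ℝ := lam * (LA + LB) * nA + (1 - lam) * LB with hs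
    have hspos : 0 < s := by
      have : 0 < lam * (LA + LB) * nA := by positivity
      nlinarith
    have hdne : -(lam * (LA + LB) * nA) - (1 - lam) * LB ≠ 0 := by
      have : -(lam * (LA + LB) * nA) - (1 - lam) * LB = -s := by rw [hs]; ring
      rw [this]
      exact neg_ne_zero.mpr (ne_of_gt hspos)
    have hval : nBstar * s = (1 - lam) * LA * nA - lam * (LA + LB) * nA ^ 2 := by
      rw [hstar, hs, div_mul_eq_mul_div, div_eq_iff hdne]
      ring
    -- g y = s * (y - nBstar)
    have hg : ∀ y : ℝ, lam * (LA + LB) * nA * (nA + y) + (1 - lam) * (y * LB - nA * LA)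
        = s * (y - nBstar) := by
      intro y
      have : s * nBstar = (1 - lam) * LA * nA - lam * (LA + LB) * nA ^ 2 := by
        rw [mul_comm]; exact hval
      rw [hs] at this ⊢
      nlinarith [this]
    have hcont : ∀ y ∈ Set.Ici (0 : ℝ), ContinuousWithinAt C (Set.Ici 0) y := by
      intro y hy
      have : (0:ℝ) ≤ y := hy
      exact ((key y (by linarith)).differentiableAt.continuousAt).continuousWithinAt
    have hderiv_sign : ∀ y : ℝ, 0 ≤ y → deriv C y =
        2 * nA / (nA + y) ^ 3 * (s * (y - nBstar)) := by
      intro y hy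
      rw [(key y (by linarith)).deriv, hg y]
    -- strict anti on [0, nBstar]
    have hanti : StrictAntiOn C (Set.Icc 0 nBstar) := by
      apply strictAntiOn_of_deriv_neg (convex_Icc 0 nBstar)
      · exact ContinuousOn.mono (fun y hy => hcont y hy) (fun y hy => hy.1)
      · intro y hy
        rw [interior_Icc] at hy
        rw [hderiv_sign y (le_of_lt hy.1)]
        have hpos : 0 < nA + y := by linarith [hy.1]
        have hfac : 0 < 2 * nA / (nA + y) ^ 3 := by positivity
        have : s * (y - nBstar) < 0 :=
          mul_neg_of_pos_of_neg hspos (by linarith [hy.2])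
        exact mul_neg_of_pos_of_neg hfac this
    -- strict mono on [nBstar, ∞)
    have hmono : StrictMonoOn C (Set.Ici nBstar) := by
      apply strictMonoOn_of_deriv_pos (convex_Ici nBstar)
      · exact ContinuousOn.mono (fun y hy => hcont y hy)
          (fun y hy => le_trans hns hy)
      · intro y hy
        rw [interior_Ici] at hy
        have hy0 : 0 ≤ y := le_trans hns (le_of_lt hy)
        rw [hderiv_sign y hy0]
        have hpos : 0 < nA + y := by linarith
        have hfac : 0 < 2 * nA / (nA + y) ^ 3 := by positivity
        have hy' : nBstar < y := Set.mem_Ioi.mp hy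
        exact mul_pos hfac (mul_pos hspos (by linarith))
    constructor
    · intro nB hnB hne
      rcases lt_or_gt_of_ne hne with hlt | hgt
      · exact hanti ⟨hnB, le_of_lt hlt⟩ ⟨hns, le_refl _⟩ hlt
      · exact hmono (Set.self_mem_Ici) (Set.mem_Ici.mpr (le_of_lt hgt)) hgt
    · have h2 : (nA * LA - nBstar * LB) * s = lam * (LA + LB) ^ 2 * nA ^ 2 := by
        rw [hs]; linear_combination (-LB) * hval
      have h3 : 0 < lam * (LA + LB) ^ 2 * nA ^ 2 := by positivity
      have h4 : 0 < (nA * LA - nBstar * LB) * s := h2 ▸ h3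
      have h1 : nBstar * LB < nA * LA := by
        rcases mul_pos_iff.mp h4 with ⟨h5, _⟩ | ⟨_, h6⟩
        · linarith
        · linarith
      have : nA * (LA / LB) = nA * LA / LB := by ring
      rw [this, lt_div_iff₀ hLB]
      exact h1
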